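/- (Meyer's rank-1 update formula, generic case.) Let A be a real m×n matrix with Moore–Penrose pseudoinverse A⁺, let c ∈ ℝᵐ and d ∈ ℝⁿ. Define the column vector k = A⁺·c ∈ ℝⁿ, the row vector h = dᵀ·A⁺ ∈ ℝᵐ (as a row), the column vector u = (Iₘ − A·A⁺)·c ∈ ℝᵐ, the row vector v = dᵀ·(Iₙ − A⁺·A) ∈ ℝⁿ, and the scalar β = 1 + dᵀ·A⁺·c. Assume u ≠ 0 and v ≠ 0. Then the n×m matrix X = A⁺ − k·u† − v†·h + β·v†·u†, where for a nonzero vector w the pseudoinverse is w† = wᵀ/‖w‖² (with ‖·‖ the Euclidean norm), satisfies the four Penrose conditions for the matrix A + c·dᵀ: (A + c·dᵀ)·X·(A + c·dᵀ) = A + c·dᵀ, X·(A + c·dᵀ)·X = X, ((A + c·dᵀ)·X)ᵀ = (A + c·dᵀ)·X, and (X·(A + c·dᵀ))ᵀ = X·(A + c·dᵀ). In particular, X is the Moore–Penrose pseudoinverse of A + c·dᵀ. -/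

import Mathlib

open Matrix

set_option linter.unusedSectionVars false
set_option maxHeartbeats 1000000

section Aux
variable {l m n o : Type*} [Fintype l] [Fintype m] [Fintype n] [Fintype o]

lemma vmv_mul (w : l → ℝ) (v : m → ℝ) (M : Matrix m n ℝ) :
    vecMulVec w v * M = vecMulVec w (vecMul v M) := by
  ext i j
  simp [vecMulVec_apply, mul_apply, vecMul, dotProduct, Finset.mul_sum, mul_assoc]

lemma mul_vmv (M : Matrix l m ℝ) (w : m → ℝ) (v : n → ℝ) :
    M * vecMulVec w v = vecMulVec (M.mulVec w) v := by
  ext i j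
  simp [vecMulVec_apply, mul_apply, mulVec, dotProduct, Finset.sum_mul, mul_assoc]

lemma vmv_mul_vmv (w : l → ℝ) (v : m → ℝ) (w' : m → ℝ) (v' : n → ℝ) :
    vecMulVec w v * vecMulVec w' v' = (v ⬝ᵥ w') • vecMulVec w v' := by
  ext i j
  simp only [vecMulVec_apply, mul_apply, Matrix.smul_apply, dotProduct, Finset.sum_mul, smul_eq_mul]
  apply Finset.sum_congr rfl
  intros; ring

lemma vmv_smul_left (a : ℝ) (w : l → ℝ) (v : m → ℝ) :
    vecMulVec (a • w) v = a • vecMulVec w v := by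
  ext i j; simp [vecMulVec_apply, mul_assoc]

lemma vmv_smul_right (a : ℝ) (w : l → ℝ) (v : m → ℝ) :
    vecMulVec w (a • v) = a • vecMulVec w v := by
  ext i j; simp [vecMulVec_apply]; ring

lemma vmv_zero_left (v : m → ℝ) : vecMulVec (0 : l → ℝ) v = 0 := by
  ext i j; simp [vecMulVec_apply]

lemma vmv_zero_right (w : l → ℝ) : vecMulVec w (0 : m → ℝ) = 0 := by
  ext i j; simp [vecMulVec_apply]

lemma vmv_sub_left (w w' : l → ℝ) (v : m → ℝ) :
    vecMulVec (w - w') v = vecMulVec w v - vecMulVec w' v := by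
  ext i j; simp [vecMulVec_apply, sub_mul]

lemma vmv_sub_right (w : l → ℝ) (v v' : m → ℝ) :
    vecMulVec w (v - v') = vecMulVec w v - vecMulVec w v' := by
  ext i j; simp [vecMulVec_apply, mul_sub]

lemma vmv_mulVec (w : l → ℝ) (v : m → ℝ) (x : m → ℝ) :
    vecMulVec w v *ᵥ x = (v ⬝ᵥ x) • w := by
  ext i
  simp only [mulVec, vecMulVec_apply, dotProduct, Pi.smul_apply, smul_eq_mul, Finset.sum_mul]
  apply Finset.sum_congr rfl
  intros; ring

lemma vecMul_vmv (x : l → ℝ) (w : l → ℝ) (v : m → ℝ) :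
    x ᵥ* vecMulVec w v = (x ⬝ᵥ w) • v := by
  ext i
  simp only [vecMul, vecMulVec_apply, dotProduct, Pi.smul_apply, smul_eq_mul, Finset.sum_mul]
  apply Finset.sum_congr rfl
  intros; ring

lemma vmv_transpose (w : l → ℝ) (v : m → ℝ) :
    (vecMulVec w v)ᵀ = vecMulVec v w := by
  ext i j; simp [vecMulVec_apply, mul_comm]

end Aux

/-- Meyer's rank-one update formula for the Moore–Penrose pseudoinverse,
generic case `u ≠ 0`, `v ≠ 0`:
`(A + c dᵀ)⁺ = A⁺ - k u† - v† h + β v† u†`. -/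
theorem meyer_rank_one_update_generic
    {m n : ℕ} (A : Matrix (Fin m) (Fin n) ℝ) (Ap : Matrix (Fin n) (Fin m) ℝ)
    (h1 : A * Ap * A = A) (h2 : Ap * A * Ap = Ap)
    (h3 : (A * Ap)ᵀ = A * Ap) (h4 : (Ap * A)ᵀ = Ap * A)
    (c : Fin m → ℝ) (d : Fin n → ℝ)
    (k : Fin n → ℝ) (hk : k = Ap.mulVec c)
    (h : Fin m → ℝ) (hh : h = Matrix.vecMul d Ap)
    (u : Fin m → ℝ) (hu : u = ((1 : Matrix (Fin m) (Fin m) ℝ) - A * Ap).mulVec c)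
    (v : Fin n → ℝ) (hv : v = Matrix.vecMul d ((1 : Matrix (Fin n) (Fin n) ℝ) - Ap * A))
    (β : ℝ) (hβ : β = 1 + d ⬝ᵥ Ap.mulVec c)
    (hu0 : u ≠ 0) (hv0 : v ≠ 0)
    (X : Matrix (Fin n) (Fin m) ℝ)
    (hX : X = Ap - vecMulVec k ((u ⬝ᵥ u)⁻¹ • u) - vecMulVec ((v ⬝ᵥ v)⁻¹ • v) h
        + β • vecMulVec ((v ⬝ᵥ v)⁻¹ • v) ((u ⬝ᵥ u)⁻¹ • u)) :
    (A + vecMulVec c d) * X * (A + vecMulVec c d) = A + vecMulVec c d ∧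
    X * (A + vecMulVec c d) * X = X ∧
    ((A + vecMulVec c d) * X)ᵀ = (A + vecMulVec c d) * X ∧
    (X * (A + vecMulVec c d))ᵀ = X * (A + vecMulVec c d) := by
  have hs : (u ⬝ᵥ u) ≠ 0 := fun h' => hu0 (dotProduct_self_eq_zero.mp h')
  have ht : (v ⬝ᵥ v) ≠ 0 := fun h' => hv0 (dotProduct_self_eq_zero.mp h')
  have hu' : u = c - (A * Ap) *ᵥ c := by rw [hu, sub_mulVec, one_mulVec]
  have hv' : v = d - d ᵥ* (Ap * A) := by rw [hv, vecMul_sub, vecMul_one]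
  have huk : u = c - A *ᵥ k := by rw [hk, mulVec_mulVec, hu']
  have hAtu : Aᵀ * (A * Ap) = Aᵀ := by
    conv_lhs => rw [← h3, ← transpose_mul]
    rw [h1]
  have F1 : Ap *ᵥ u = 0 := by
    rw [hu', mulVec_sub, mulVec_mulVec, ← Matrix.mul_assoc, h2, sub_self]
  have F2 : u ᵥ* A = 0 := by
    have e : ∀ x : Fin m → ℝ, x ᵥ* A = Aᵀ *ᵥ x := fun x => (mulVec_transpose A x).symm
    rw [hu', sub_vecMul, e, e, mulVec_mulVec, hAtu, sub_self]
  have F3 : v ᵥ* Ap = 0 := by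
    rw [hv', sub_vecMul, vecMul_vecMul, Matrix.mul_assoc, ← Matrix.mul_assoc, h2, sub_self]
  have hdApA : d ᵥ* (Ap * A) = (Ap * A) *ᵥ d := by rw [← mulVec_transpose, h4]
  have F4 : A *ᵥ v = 0 := by
    rw [hv', mulVec_sub, hdApA, mulVec_mulVec, ← Matrix.mul_assoc, h1, sub_self]
  have F12 : u ᵥ* (A * Ap) = 0 := by rw [← vecMul_vecMul, F2, zero_vecMul]
  have F5 : u ⬝ᵥ c = u ⬝ᵥ u := by
    have e : u ⬝ᵥ (c - (A * Ap) *ᵥ c) = u ⬝ᵥ c := by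
      rw [dotProduct_sub, dotProduct_mulVec, F12, zero_dotProduct, sub_zero]
    rw [← e, ← hu']
  have F6 : d ⬝ᵥ v = v ⬝ᵥ v := by
    have hA : (Ap * A) *ᵥ v = 0 := by rw [← mulVec_mulVec, F4, mulVec_zero]
    have e : (d - d ᵥ* (Ap * A)) ⬝ᵥ v = d ⬝ᵥ v := by
      rw [sub_dotProduct, ← dotProduct_mulVec, hA, dotProduct_zero, sub_zero]
    rw [← e, ← hv']
  have F7 : d ⬝ᵥ k = β - 1 := by rw [hβ, hk]; ring
  have F8 : h ⬝ᵥ c = β - 1 := by rw [hh, ← dotProduct_mulVec, hβ]; ring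
  have F9 : h ⬝ᵥ u = 0 := by rw [hh, ← dotProduct_mulVec, F1, dotProduct_zero]
  have F11 : h ᵥ* (A * Ap) = h := by rw [hh, vecMul_vecMul, ← Matrix.mul_assoc, h2]
  have FhA : h ᵥ* A = d ᵥ* (Ap * A) := by rw [hh, vecMul_vecMul]
  have hApAAp : Ap * (A * Ap) = Ap := by rw [← Matrix.mul_assoc, h2]
  have hRHS1 : vecMulVec c u - vecMulVec (A *ᵥ k) u = vecMulVec u u := by
    rw [← vmv_sub_left, ← huk]
  have hRHS2 : vecMulVec v d - vecMulVec v (d ᵥ* (Ap * A)) = vecMulVec v v := by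
    rw [← vmv_sub_right, ← hv']
  have hRHS3 : vecMulVec c d - vecMulVec ((A * Ap) *ᵥ c) d = vecMulVec u d := by
    rw [← vmv_sub_left, ← hu']
  have key1 : (A + vecMulVec c d) * X = A * Ap + (u ⬝ᵥ u)⁻¹ • vecMulVec u u := by
    rw [← hRHS1]
    rw [hX]
    simp only [Matrix.add_mul, Matrix.mul_add, Matrix.mul_sub, Matrix.sub_mul, Matrix.smul_mul, Matrix.mul_smul,
      mul_vmv, vmv_mul, vmv_mul_vmv, vmv_smul_left, vmv_smul_right, smul_smul,
      mulVec_smul, vecMul_smul, smul_dotProduct, dotProduct_smul, vmv_mulVec, vecMul_vmv, zero_add, add_zero, smul_zero, zero_smul,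
      F4, vmv_zero_left, smul_zero, F6, F7, ← hh]
    match_scalars <;> field_simp <;> ring
  have key2 : X * (A + vecMulVec c d) = Ap * A + (v ⬝ᵥ v)⁻¹ • vecMulVec v v := by
    rw [← hRHS2]
    rw [hX]
    simp only [Matrix.add_mul, Matrix.mul_add, Matrix.mul_sub, Matrix.sub_mul, Matrix.smul_mul, Matrix.mul_smul,
      mul_vmv, vmv_mul, vmv_mul_vmv, vmv_smul_left, vmv_smul_right, smul_smul,
      mulVec_smul, vecMul_smul, smul_dotProduct, dotProduct_smul, vmv_mulVec, vecMul_vmv, zero_add, add_zero, smul_zero, zero_smul,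
      F2, vmv_zero_right, smul_zero, F5, F8, FhA, ← hk]
    match_scalars <;> field_simp <;> ring
  refine ⟨?_, ?_, ?_, ?_⟩
  · rw [key1]
    simp only [Matrix.add_mul, Matrix.mul_add, Matrix.smul_mul, Matrix.mul_smul, vmv_mul,
      vmv_mul_vmv, mul_vmv, vmv_mulVec, vecMul_vmv, vmv_smul_left, vmv_smul_right,
      F2, vmv_zero_right, smul_zero, smul_smul, F5, h1, add_zero, zero_add]
    rw [← hRHS3]
    match_scalars <;> field_simp <;> ring
  · rw [Matrix.mul_assoc, key1]
    conv_lhs => rw [hX]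
    conv_rhs => rw [hX]
    simp only [Matrix.add_mul, Matrix.mul_add, Matrix.mul_sub, Matrix.sub_mul, Matrix.smul_mul, Matrix.mul_smul,
      mul_vmv, vmv_mul, vmv_mul_vmv, vmv_smul_left, vmv_smul_right, smul_smul,
      mulVec_smul, vecMul_smul, smul_dotProduct, dotProduct_smul, vmv_mulVec, vecMul_vmv, zero_add, add_zero, smul_zero, zero_smul,
      F1, F9, F12, F11, vmv_zero_left, vmv_zero_right, smul_zero, zero_smul,
      hApAAp]
    match_scalars <;> field_simp <;> ring
  · rw [key1, transpose_add, transpose_smul, h3, vmv_transpose]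
  · rw [key2, transpose_add, transpose_smul, h4, vmv_transpose]
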